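/- Let (F_t)_{t∈ℕ₀} be a filtration and let P = (P_t)_{t∈ℕ₀} be a [0,1]-valued adapted process with P₀ > 0 a constant, such that for every t there is a [0,1]-valued F_{t+1}-measurable random variable X_{t+1} with P_{t+1} = P_t + (1/(t+2))·(X_{t+1} − P_t) and E_t[X_{t+1}] ≥ P_t almost surely. Fix y > 0 and define the stopping time ρ := min{ t ∈ ℕ₀ : P_t ≥ y/(t+2) } (with min ∅ := ∞). Then ℙ(ρ < ∞) = 1. -/

import Mathlib

open MeasureTheory Filter Set

private lemma telescope_aux (y : ℝ) (q x : ℕ → ℝ)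
    (hrec : ∀ s, q (s + 1) = q s + x (s + 1))
    (hx0 : ∀ s, 0 ≤ x (s + 1)) (hx1 : ∀ s, x (s + 1) ≤ 1) :
    ∀ n, (∑ s ∈ Finset.range n, (if q s < y then x (s + 1) else 0))
      ≤ min (q n) (y + 1) - min (q 0) (y + 1) := by
  intro n
  induction n with
  | zero => simp
  | succ n ih =>
    rw [Finset.sum_range_succ]
    by_cases h : q n < y
    · have h1 : min (q n) (y + 1) = q n := min_eq_left (by linarith)
      have h2 : min (q (n + 1)) (y + 1) = q (n + 1) := by
        rw [hrec n]; exact min_eq_left (by have := hx1 n; linarith)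
      rw [if_pos h, h2, hrec n]
      rw [h1] at ih
      linarith
    · rw [if_neg h]
      have hmono : min (q n) (y + 1) ≤ min (q (n + 1)) (y + 1) := by
        refine min_le_min ?_ le_rfl
        rw [hrec n]; linarith [hx0 n]
      linarith

/-- Arbitrary slowing down over time for `θ_t = 1/(t+2)`: if `P` is a `[0,1]`-valued
adapted process with `P₀ > 0` constant, `P_{t+1} = P_t + (1/(t+2))·(X_{t+1} − P_t)` with
`E_t[X_{t+1}] ≥ P_t` a.s., then for every `y > 0` the stopping time
`ρ = min{t : P_t ≥ y/(t+2)}` is almost surely finite. -/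
theorem stmt8 {Ω : Type*} {m : MeasurableSpace Ω} {μ : Measure Ω} [IsProbabilityMeasure μ]
    (𝓕 : Filtration ℕ m) (P X : ℕ → Ω → ℝ) (p₀ : ℝ) (hp₀ : 0 < p₀)
    (hP0 : ∀ ω, P 0 ω = p₀)
    (hP_adapted : ∀ t, StronglyMeasurable[𝓕 t] (P t))
    (hP_mem : ∀ t, ∀ᵐ ω ∂μ, P t ω ∈ Set.Icc (0 : ℝ) 1)
    (hX_meas : ∀ t : ℕ, StronglyMeasurable[𝓕 (t + 1)] (X (t + 1)))
    (hX_mem : ∀ t : ℕ, ∀ᵐ ω ∂μ, X (t + 1) ω ∈ Set.Icc (0 : ℝ) 1)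
    (hX_int : ∀ t : ℕ, Integrable (X (t + 1)) μ)
    (hrec : ∀ t : ℕ, ∀ᵐ ω ∂μ,
      P (t + 1) ω = P t ω + (1 / ((t : ℝ) + 2)) * (X (t + 1) ω - P t ω))
    (hsub : ∀ t, ∀ᵐ ω ∂μ, P t ω ≤ (μ[X (t + 1)|𝓕 t]) ω)
    (y : ℝ) (hy : 0 < y) :
    ∀ᵐ ω ∂μ, ∃ t : ℕ, y / ((t : ℝ) + 2) ≤ P t ω := by
  classical
  set Q : ℕ → Ω → ℝ := fun t ω => ((t : ℝ) + 1) * P t ω with hQdef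
  -- good event
  have hG : ∀ᵐ ω ∂μ, (∀ t, P t ω ∈ Set.Icc (0 : ℝ) 1) ∧ (∀ t, X (t + 1) ω ∈ Set.Icc (0 : ℝ) 1)
      ∧ ∀ t, P (t + 1) ω = P t ω + (1 / ((t : ℝ) + 2)) * (X (t + 1) ω - P t ω) :=
    ((ae_all_iff.2 hP_mem).and ((ae_all_iff.2 hX_mem).and (ae_all_iff.2 hrec))).mono
      (fun ω h => ⟨h.1, h.2.1, h.2.2⟩)
  -- pointwise recursion for Q
  have hQrec : ∀ t (ω : Ω),
      P (t + 1) ω = P t ω + (1 / ((t : ℝ) + 2)) * (X (t + 1) ω - P t ω) →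
      Q (t + 1) ω = Q t ω + X (t + 1) ω := by
    intro t ω h
    have h2 : ((t : ℝ) + 2) ≠ 0 := by positivity
    simp only [hQdef]
    push_cast
    rw [h]
    field_simp
    ring
  -- on the good event, Q t ≥ p₀ and Q satisfies the recursion
  have hQlb : ∀ᵐ ω ∂μ, ∀ t, p₀ ≤ Q t ω := by
    filter_upwards [hG] with ω ⟨hp, hx, hr⟩
    intro t
    induction t with
    | zero => simp [hQdef, hP0]
    | succ t ih =>
      rw [hQrec t ω (hr t)]
      linarith [(hx t).1
]
  -- sets
  set A : ℕ → Set Ω := fun s => {ω | Q s ω < y} with hAdef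
  set T : Set Ω := ⋂ s, A s with hTdef
  have hAmeas𝓕 : ∀ s, MeasurableSet[𝓕 s] (A s) := by
    intro s
    exact measurableSet_lt (((hP_adapted s).measurable).const_mul _) measurable_const
  have hAmeas : ∀ s, MeasurableSet (A s) := fun s => 𝓕.le s _ (hAmeas𝓕 s)
  have hTmeas : MeasurableSet T := MeasurableSet.iInter hAmeas
  -- integrability of P s
  have hPint : ∀ s, Integrable (P s) μ := by
    intro s
    refine (integrable_const (1 : ℝ)).mono'
      (((hP_adapted s).mono (𝓕.le s)).aestronglyMeasurable) ?_
    filter_upwards [hP_mem s] with ω hω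
    rw [Real.norm_eq_abs, abs_le]
    exact ⟨by linarith [hω.1], hω.2⟩
  -- key lower bound for each set integral
  have key : ∀ s : ℕ, (p₀ / ((s : ℝ) + 1)) * (μ T).toReal ≤ ∫ ω in A s, X (s + 1) ω ∂μ := by
    intro s
    have hs1 : (0 : ℝ) < (s : ℝ) + 1 := by positivity
    have step1 : ∫ ω in A s, X (s + 1) ω ∂μ = ∫ ω in A s, (μ[X (s + 1)|𝓕 s]) ω ∂μ :=
      (setIntegral_condExp (𝓕.le s) (hX_int s) (hAmeas𝓕 s)).symm
    have step2 : ∫ ω in A s, P s ω ∂μ ≤ ∫ ω in A s, (μ[X (s + 1)|𝓕 s]) ω ∂μ :=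
      setIntegral_mono_ae (hPint s).integrableOn integrable_condExp.integrableOn (hsub s)
    have step3 : ∫ ω in T, P s ω ∂μ ≤ ∫ ω in A s, P s ω ∂μ := by
      refine setIntegral_mono_set (hPint s).integrableOn ?_
        (Filter.Eventually.of_forall fun ω hω => Set.mem_iInter.1 hω s)
      refine ae_restrict_of_ae ?_
      filter_upwards [hP_mem s] with ω hω using hω.1
    have step4 : (p₀ / ((s : ℝ) + 1)) * (μ T).toReal ≤ ∫ ω in T, P s ω ∂μ := by
      have hc : ∫ (_ : Ω) in T, (p₀ / ((s : ℝ) + 1)) ∂μ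
          = (μ T).toReal * (p₀ / ((s : ℝ) + 1)) := by
        rw [setIntegral_const, smul_eq_mul]
        rfl
      rw [mul_comm, ← hc]
      refine setIntegral_mono_ae (integrableOn_const (measure_lt_top μ T).ne)
        (hPint s).integrableOn ?_
      filter_upwards [hQlb] with ω hω
      have := hω s
      rw [div_le_iff₀ hs1]
      calc p₀ ≤ Q s ω := this
        _ = P s ω * ((s : ℝ) + 1) := by simp [hQdef]; ring
    linarith
  -- upper bound on the sums of set integrals
  have upper : ∀ n : ℕ, ∑ s ∈ Finset.range n, ∫ ω in A s, X (s + 1) ω ∂μ ≤ y + 1 := by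
    intro n
    have hind_int : ∀ s : ℕ, Integrable ((A s).indicator (X (s + 1))) μ := fun s =>
      (hX_int s).indicator (hAmeas s)
    have heq : ∑ s ∈ Finset.range n, ∫ ω in A s, X (s + 1) ω ∂μ
        = ∫ ω, (∑ s ∈ Finset.range n, (A s).indicator (X (s + 1)) ω) ∂μ := by
      rw [integral_finset_sum _ (fun s _ => hind_int s)]
      exact Finset.sum_congr rfl fun s _ => (integral_indicator (hAmeas s)).symm
    rw [heq]
    have hb : ∀ᵐ ω ∂μ, (∑ s ∈ Finset.range n, (A s).indicator (X (s + 1)) ω) ≤ y + 1 := by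
      filter_upwards [hG, hQlb] with ω ⟨hp, hx, hr⟩ hlb
      have hrw : ∀ s, (A s).indicator (X (s + 1)) ω = if Q s ω < y then X (s + 1) ω else 0 := by
        intro s
        simp [Set.indicator_apply, hAdef]
      calc (∑ s ∈ Finset.range n, (A s).indicator (X (s + 1)) ω)
          = ∑ s ∈ Finset.range n, (if Q s ω < y then X (s + 1) ω else 0) :=
            Finset.sum_congr rfl fun s _ => hrw s
        _ ≤ min (Q n ω) (y + 1) - min (Q 0 ω) (y + 1) :=
            telescope_aux y (fun s => Q s ω) (fun s => X s ω)
              (fun s => hQrec s ω (hr s)) (fun s => (hx s).1) (fun s => (hx s).2) n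
        _ ≤ y + 1 := by
            have h1 : min (Q n ω) (y + 1) ≤ y + 1 := min_le_right _ _
            have h2 : (0 : ℝ) ≤ min (Q 0 ω) (y + 1) :=
              le_min (by linarith [hlb 0]) (by linarith)
            linarith
    calc ∫ ω, (∑ s ∈ Finset.range n, (A s).indicator (X (s + 1)) ω) ∂μ
        ≤ ∫ _ω, (y + 1) ∂μ :=
          integral_mono_ae (integrable_finset_sum _ fun s _ => hind_int s)
            (integrable_const _) hb
      _ = y + 1 := by simp
  -- conclude μ T = 0
  have hμT : μ T = 0 := by
    by_contra hne
    have hpos : 0 < (μ T).toReal :=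
      ENNReal.toReal_pos hne (measure_ne_top μ T)
    have hdiv := Real.tendsto_sum_range_one_div_nat_succ_atTop
    have hbig : ∀ n : ℕ, (p₀ * (μ T).toReal) * (∑ s ∈ Finset.range n, (1 / ((s : ℝ) + 1)))
        ≤ y + 1 := by
      intro n
      calc (p₀ * (μ T).toReal) * (∑ s ∈ Finset.range n, (1 / ((s : ℝ) + 1)))
          = ∑ s ∈ Finset.range n, (p₀ / ((s : ℝ) + 1)) * (μ T).toReal := by
            rw [Finset.mul_sum]
            exact Finset.sum_congr rfl fun s _ => by ring
        _ ≤ ∑ s ∈ Finset.range n, ∫ ω in A s, X (s + 1) ω ∂μ :=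
            Finset.sum_le_sum fun s _ => key s
        _ ≤ y + 1 := upper n
    have hcp : 0 < p₀ * (μ T).toReal := by positivity
    have : Tendsto (fun n => (p₀ * (μ T).toReal) *
        (∑ s ∈ Finset.range n, (1 / ((s : ℝ) + 1)))) atTop atTop :=
      hdiv.const_mul_atTop hcp
    obtain ⟨n, hn⟩ := (this.eventually_gt_atTop (y + 1)).exists
    exact absurd (hbig n) (not_le.2 hn)
  -- finish
  have hnotT : ∀ᵐ ω ∂μ, ω ∉ T := by
    rw [ae_iff]
    simpa using hμT
  filter_upwards [hnotT, hP_mem 0] with ω hω _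
  rw [hTdef, Set.mem_iInter] at hω
  push_neg at hω
  obtain ⟨s, hs⟩ := hω
  rw [hAdef] at hs
  simp only [Set.mem_setOf_eq, not_lt] at hs
  refine ⟨s, ?_⟩
  have hs1 : (0 : ℝ) < (s : ℝ) + 1 := by positivity
  have hs2 : (0 : ℝ) < (s : ℝ) + 2 := by positivity
  have h1 : y / ((s : ℝ) + 2) ≤ y / ((s : ℝ) + 1) :=
    div_le_div_of_nonneg_left hy.le hs1 (by linarith)
  have h2 : y / ((s : ℝ) + 1) ≤ P s ω := by
    rw [div_le_iff₀ hs1]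
    calc y ≤ Q s ω := hs
      _ = P s ω * ((s : ℝ) + 1) := by simp [hQdef]; ring
  linarith
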